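/- Under these assumptions, for every real polynomial Q with zero constant term: ‖ Σ_{j=0}^∞ T_j · Q(e^{−sj}) − (s^α ℓ(1/s))^{−1} (∫_0^∞ Q(e^{−x}) dσ_s(x)) · P ‖ = o( (s^α ℓ(1/s))^{−1} ) as s → 0⁺, where σ_s denotes the Lebesgue–Stieltjes measure of the nondecreasing function x ↦ p(x/s) x^α. -/

import Mathlib

open Set Filter Topology Real MeasureTheory

set_option maxHeartbeats 4000000

/-- Step 1 of the operator Karamata theorem. Under the stated
assumptions, for every real polynomial `Q` with zero constant term,
`‖Σ_j T_j Q(e^{−sj}) − (s^α ℓ(1/s))⁻¹ (∫ Q(e^{−x}) dσ_s(x)) P‖ = o((s^α ℓ(1/s))⁻¹)`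
as `s → 0⁺`, where `σ_s` is the Lebesgue–Stieltjes measure of `x ↦ p(x/s)x^α`. -/
theorem stmt_11 (α c : ℝ) (hα0 : 0 < α) (hα1 : α < 1) (hc : 1 < c)
    -- a Banach lattice B and uniformly bounded positive operators T_n
    (B : Type*) [NormedAddCommGroup B] [Lattice B] [HasSolidNorm B] [IsOrderedAddMonoid B] [NormedSpace ℝ B] [CompleteSpace B]
    (T : ℕ → B →L[ℝ] B)
    (hTpos : ∀ n : ℕ, ∀ v : B, 0 ≤ v → 0 ≤ T n v)
    (hTbdd : ∃ K : ℝ, ∀ n : ℕ, ‖T n‖ ≤ K)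
    -- T̂(e^{−s}) = Σ_n e^{−sn} T_n, convergent in operator norm
    (That : ℝ → B →L[ℝ] B)
    (hThat : ∀ s > (0 : ℝ), HasSum (fun n : ℕ => Real.exp (-s * n) • T n) (That s))
    -- a bounded operator P
    (P : B →L[ℝ] B)
    -- a slowly varying function ℓ
    (ℓ : ℝ → ℝ)
    (hℓpos : ∀ x > (0 : ℝ), 0 < ℓ x)
    (hℓsv : ∀ t > (0 : ℝ),
      Filter.Tendsto (fun x : ℝ => ℓ (t * x) / ℓ x) Filter.atTop (nhds 1))
    -- q₀ : bounded, bounded away from zero, log-periodic, with s ↦ s^{−α} q₀(s)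
    -- completely monotone
    (q₀ : ℝ → ℝ)
    (hq₀pos : ∀ s > (0 : ℝ), 0 < q₀ s)
    (hq₀bdd : ∃ K : ℝ, ∀ s > (0 : ℝ), q₀ s ≤ K)
    (hq₀low : ∃ m > (0 : ℝ), ∀ s > (0 : ℝ), m ≤ q₀ s)
    (hq₀per : ∀ s > (0 : ℝ), q₀ (c ^ (1 / α) * s) = q₀ s)
    (hq₀cm : ∀ n : ℕ, ∀ s > (0 : ℝ),
      0 ≤ (-1 : ℝ) ^ n * iteratedDeriv n (fun u : ℝ => u ^ (-α) * q₀ u) s)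
    -- p : bounded, positive, log-periodic, x^α p(x) nondecreasing and right-continuous,
    -- with Laplace–Stieltjes transform s^α ∫ e^{−sx} d(p(x)x^α) = 1/q₀(s)
    (p : ℝ → ℝ)
    (hppos : ∀ x > (0 : ℝ), 0 < p x)
    (hpbdd : ∃ K : ℝ, ∀ x > (0 : ℝ), p x ≤ K)
    (hpper : ∀ x > (0 : ℝ), p (c ^ (1 / α) * x) = p x)
    (hpmono : MonotoneOn (fun x : ℝ => x ^ α * p x) (Set.Ioi 0))
    (hprc : ∀ x > (0 : ℝ), ContinuousWithinAt (fun x : ℝ => x ^ α * p x) (Set.Ici x) x)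
    (σp : Measure ℝ)
    (hσp : ∀ a b : ℝ, 0 < a → a ≤ b →
      σp (Set.Ioc a b) = ENNReal.ofReal (p b * b ^ α - p a * a ^ α))
    (hσp0 : σp (Set.Iic 0) = 0)
    (hσp0' : ∀ b > (0 : ℝ), σp (Set.Ioc 0 b) = ENNReal.ofReal (p b * b ^ α))
    (hpq : ∀ s > (0 : ℝ), s ^ α * ∫ x : ℝ, Real.exp (-s * x) ∂σp = 1 / q₀ s)
    -- the main hypothesis: T̂(e^{−s}) ∼ (s^α ℓ(1/s) q₀(s))⁻¹ P as s → 0⁺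
    (hmain : Filter.Tendsto
      (fun s : ℝ => ‖That s - (s ^ α * ℓ (1 / s) * q₀ s)⁻¹ • P‖ * (s ^ α * ℓ (1 / s) * q₀ s))
      (nhdsWithin 0 (Set.Ioi 0)) (nhds 0))
    -- the Lebesgue–Stieltjes measures σ_s of x ↦ p(x/s) x^α
    (σ : ℝ → Measure ℝ)
    (hσ : ∀ s > (0 : ℝ), ∀ a b : ℝ, 0 < a → a ≤ b →
      σ s (Set.Ioc a b) = ENNReal.ofReal (p (b / s) * b ^ α - p (a / s) * a ^ α))
    (hσ0 : ∀ s > (0 : ℝ), σ s (Set.Iic 0) = 0)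
    (hσ0' : ∀ s > (0 : ℝ), ∀ b > (0 : ℝ),
      σ s (Set.Ioc 0 b) = ENNReal.ofReal (p (b / s) * b ^ α))
    : ∀ Q : Polynomial ℝ, Q.coeff 0 = 0 →
      Filter.Tendsto
        (fun s : ℝ =>
          ‖(∑' j : ℕ, Q.eval (Real.exp (-s * j)) • T j)
              - ((s ^ α * ℓ (1 / s))⁻¹ * ∫ x : ℝ, Q.eval (Real.exp (-x)) ∂(σ s)) • P‖
            * (s ^ α * ℓ (1 / s)))
        (nhdsWithin 0 (Set.Ioi 0)) (nhds 0) := by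
  intro Q hQ0
  obtain ⟨m, hm0, hmlow⟩ := hq₀low
  set N : ℕ := Q.natDegree + 1 with hN
  -- Laplace transform of σp
  have hJ : ∀ t > (0:ℝ), ∫ y : ℝ, Real.exp (-t * y) ∂σp = (t ^ α * q₀ t)⁻¹ := by
    intro t ht
    have htα : (0:ℝ) < t ^ α := Real.rpow_pos_of_pos ht α
    have h := hpq t ht
    have h2 : (t ^ α)⁻¹ * (t ^ α * ∫ y : ℝ, Real.exp (-t * y) ∂σp)
        = (t ^ α)⁻¹ * (1 / q₀ t) := by rw [h]
    rw [← mul_assoc, inv_mul_cancel₀ htα.ne', one_mul] at h2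
    rw [h2, one_div, mul_inv]
  have hJint : ∀ t > (0:ℝ), Integrable (fun y : ℝ => Real.exp (-t * y)) σp := by
    intro t ht
    by_contra hni
    have h0 := integral_undef hni
    rw [hJ t ht] at h0
    exact (inv_pos.mpr (mul_pos (Real.rpow_pos_of_pos ht α) (hq₀pos t ht))).ne' h0
  -- measure identification
  have hmeasid : ∀ s : ℝ, 0 < s →
      σ s = (ENNReal.ofReal (s ^ α)) • Measure.map (fun y : ℝ => s * y) σp := by
    intro s hs
    have hsα : (0:ℝ) < s ^ α := Real.rpow_pos_of_pos hs α
    have hmap : ∀ b : ℝ, (Measure.map (fun y : ℝ => s * y) σp) (Iic b) = σp (Iic (b / s)) := by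
      intro b
      rw [Measure.map_apply (measurable_const_mul s) measurableSet_Iic]
      congr 1
      ext y
      simp only [mem_preimage, mem_Iic]
      rw [← le_div_iff₀' hs]
    have hIicL : ∀ b : ℝ, σ s (Iic b)
        = ENNReal.ofReal (if 0 < b then p (b / s) * b ^ α else 0) := by
      intro b
      rcases lt_or_ge 0 b with hb | hb
      · rw [if_pos hb, ← Iic_union_Ioc_eq_Iic hb.le,
          measure_union (Iic_disjoint_Ioc le_rfl) measurableSet_Ioc, hσ0 s hs,
          hσ0' s hs b hb, zero_add]
      · rw [if_neg (not_lt.mpr hb)]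
        simp only [ENNReal.ofReal_zero]
        exact le_antisymm ((measure_mono (Iic_subset_Iic.mpr hb)).trans_eq (hσ0 s hs)) (zero_le)
    have hIicR : ∀ b : ℝ, σp (Iic b)
        = ENNReal.ofReal (if 0 < b then p b * b ^ α else 0) := by
      intro b
      rcases lt_or_ge 0 b with hb | hb
      · rw [if_pos hb, ← Iic_union_Ioc_eq_Iic hb.le,
          measure_union (Iic_disjoint_Ioc le_rfl) measurableSet_Ioc, hσp0,
          hσp0' b hb, zero_add]
      · rw [if_neg (not_lt.mpr hb)]
        simp only [ENNReal.ofReal_zero]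
        exact le_antisymm ((measure_mono (Iic_subset_Iic.mpr hb)).trans_eq hσp0) (zero_le)
    refine Measure.ext_of_generateFrom_of_iUnion (range Iic) (fun n : ℕ => Iic (n:ℝ))
      (BorelSpace.measurable_eq.trans (borel_eq_generateFrom_Iic ℝ)) isPiSystem_Iic ?_
      (fun n => ⟨(n:ℝ), rfl⟩) ?_ ?_
    · ext x
      simp only [mem_iUnion, mem_Iic, mem_univ, iff_true]
      exact ⟨⌈x⌉₊, Nat.le_ceil x⟩
    · intro n
      rw [hIicL]
      exact ENNReal.ofReal_ne_top
    · rintro t ⟨b, rfl⟩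
      rw [hIicL b, Measure.smul_apply, smul_eq_mul, hmap b, hIicR (b / s)]
      rcases lt_or_ge 0 b with hb | hb
      · rw [if_pos hb, if_pos (div_pos hb hs), ← ENNReal.ofReal_mul hsα.le]
        congr 1
        rw [Real.div_rpow hb.le hs.le]
        field_simp
      · have hbs : ¬ (0 < b / s) := not_lt.mpr (div_nonpos_iff.mpr (Or.inr ⟨hb, hs.le⟩))
        rw [if_neg (not_lt.mpr hb), if_neg hbs]
        simp
  -- integrability and integral wrt σ s
  have hσint : ∀ s : ℝ, 0 < s → ∀ k : ℕ, 0 < k →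
      Integrable (fun x : ℝ => Real.exp (-(k:ℝ) * x)) (σ s) := by
    intro s hs k hk
    have hks : (0:ℝ) < (k:ℝ) * s := mul_pos (Nat.cast_pos.mpr hk) hs
    rw [hmeasid s hs]
    refine Integrable.smul_measure ?_ ENNReal.ofReal_ne_top
    rw [integrable_map_measure
      ((by fun_prop : Continuous fun x : ℝ => Real.exp (-(k:ℝ) * x)).aestronglyMeasurable)
      (measurable_const_mul s).aemeasurable]
    have hc : ((fun x : ℝ => Real.exp (-(k:ℝ) * x)) ∘ (fun y : ℝ => s * y))
        = fun y : ℝ => Real.exp (-((k:ℝ) * s) * y) := by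
      funext y; simp only [Function.comp_apply]; ring_nf
    rw [hc]
    exact hJint _ hks
  have hσI : ∀ s : ℝ, 0 < s → ∀ k : ℕ, 0 < k →
      ∫ x : ℝ, Real.exp (-(k:ℝ) * x) ∂(σ s) = ((k:ℝ) ^ α * q₀ ((k:ℝ) * s))⁻¹ := by
    intro s hs k hk
    have hkpos : (0:ℝ) < (k:ℝ) := Nat.cast_pos.mpr hk
    have hks : (0:ℝ) < (k:ℝ) * s := mul_pos hkpos hs
    have hsα : (0:ℝ) < s ^ α := Real.rpow_pos_of_pos hs α
    have hkα : (0:ℝ) < (k:ℝ) ^ α := Real.rpow_pos_of_pos hkpos α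
    have hq : (0:ℝ) < q₀ ((k:ℝ) * s) := hq₀pos _ hks
    rw [hmeasid s hs, integral_smul_measure,
      integral_map (measurable_const_mul s).aemeasurable
        ((by fun_prop : Continuous fun x : ℝ => Real.exp (-(k:ℝ) * x)).aestronglyMeasurable)]
    have hc : (fun y : ℝ => Real.exp (-(k:ℝ) * (s * y)))
        = fun y : ℝ => Real.exp (-((k:ℝ) * s) * y) := by
      funext y; ring_nf
    rw [hc, hJ _ hks, ENNReal.toReal_ofReal (Real.rpow_nonneg hs.le α),
      Real.mul_rpow hkpos.le hs.le, smul_eq_mul]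
    field_simp
  -- polynomial evaluation as a sum of exponentials
  have hQeval : ∀ x : ℝ, Polynomial.eval (Real.exp x) Q
      = ∑ i ∈ Finset.range N, Q.coeff i * Real.exp ((i:ℝ) * x) := by
    intro x
    rw [Polynomial.eval_eq_sum_range]
    exact Finset.sum_congr rfl fun i _ => by rw [Real.exp_nat_mul]
  -- the series identity
  have htsum : ∀ s : ℝ, 0 < s → (∑' j : ℕ, Polynomial.eval (Real.exp (-s * j)) Q • T j)
      = ∑ i ∈ Finset.range N, Q.coeff i • That ((i:ℝ) * s) := by
    intro s hs
    refine HasSum.tsum_eq ?_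
    have h1 : ∀ j : ℕ, Polynomial.eval (Real.exp (-s * j)) Q • T j
        = ∑ i ∈ Finset.range N, Q.coeff i • (Real.exp (-((i:ℝ) * s) * j) • T j) := by
      intro j
      rw [hQeval, Finset.sum_smul]
      refine Finset.sum_congr rfl fun i _ => ?_
      rw [mul_smul]
      congr 2
      ring
    have h2 : HasSum (fun j : ℕ => ∑ i ∈ Finset.range N,
        Q.coeff i • (Real.exp (-((i:ℝ) * s) * j) • T j))
        (∑ i ∈ Finset.range N, Q.coeff i • That ((i:ℝ) * s)) := by
      refine hasSum_sum fun i _ => ?_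
      rcases Nat.eq_zero_or_pos i with rfl | hi
      · simpa [hQ0] using (hasSum_zero : HasSum (fun _ : ℕ => (0 : B →L[ℝ] B)) 0)
      · exact (hThat _ (mul_pos (Nat.cast_pos.mpr hi) hs)).const_smul _
    simp only [h1]
    exact h2
  -- the integral identity
  have hIeq : ∀ s : ℝ, 0 < s → (∫ x : ℝ, Polynomial.eval (Real.exp (-x)) Q ∂(σ s))
      = ∑ i ∈ Finset.range N, Q.coeff i * ((i:ℝ) ^ α * q₀ ((i:ℝ) * s))⁻¹ := by
    intro s hs
    have h1 : ∀ x : ℝ, Polynomial.eval (Real.exp (-x)) Q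
        = ∑ i ∈ Finset.range N, Q.coeff i * Real.exp (-(i:ℝ) * x) := by
      intro x
      rw [hQeval]
      exact Finset.sum_congr rfl fun i _ => by ring_nf
    simp only [h1]
    rw [integral_finset_sum]
    · refine Finset.sum_congr rfl fun i _ => ?_
      rcases Nat.eq_zero_or_pos i with rfl | hi
      · simp [hQ0]
      · rw [MeasureTheory.integral_const_mul, hσI s hs i hi]
    · intro i _
      rcases Nat.eq_zero_or_pos i with rfl | hi
      · simpa [hQ0] using (integrable_zero ℝ ℝ (σ s))
      · exact (hσint s hs i hi).const_mul _
  -- maps to 0+ and the slowly-varying ratio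
  have hks0 : ∀ k : ℝ, 0 < k →
      Tendsto (fun s : ℝ => k * s) (𝓝[>] (0:ℝ)) (𝓝[>] (0:ℝ)) := by
    intro k hk
    refine tendsto_nhdsWithin_of_tendsto_nhds_of_eventually_within _ ?_ ?_
    · have h : Tendsto (fun s : ℝ => k * s) (𝓝 (0:ℝ)) (𝓝 (k * 0)) :=
        Continuous.tendsto (by fun_prop) 0
      rw [mul_zero] at h
      exact h.mono_left nhdsWithin_le_nhds
    · filter_upwards [self_mem_nhdsWithin] with s hs
      exact mul_pos hk hs
  have hratio : ∀ k : ℝ, 0 < k →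
      Tendsto (fun s : ℝ => ℓ (1 / s) / ℓ (1 / (k * s))) (𝓝[>] (0:ℝ)) (𝓝 1) := by
    intro k hk
    have h1 : Tendsto (fun s : ℝ => (k * s)⁻¹) (𝓝[>] (0:ℝ)) atTop :=
      tendsto_inv_nhdsGT_zero.comp (hks0 k hk)
    have h2 := (hℓsv k hk).comp h1
    refine h2.congr' ?_
    filter_upwards [self_mem_nhdsWithin] with s hs
    have hks : (0:ℝ) < k * s := mul_pos hk hs
    have he : k * (k * s)⁻¹ = 1 / s := by
      rw [mul_inv, ← mul_assoc, mul_inv_cancel₀ hk.ne', one_mul, one_div]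
    simp only [Function.comp_apply, he, one_div]
  -- the core convergence for a fixed multiplier k > 0
  have hcore : ∀ k : ℝ, 0 < k → Tendsto (fun s : ℝ =>
      ‖That (k * s) - ((s ^ α * ℓ (1 / s))⁻¹ * (k ^ α * q₀ (k * s))⁻¹) • P‖
        * (s ^ α * ℓ (1 / s))) (𝓝[>] (0:ℝ)) (𝓝 0) := by
    intro k hk
    have hkα : (0:ℝ) < k ^ α := Real.rpow_pos_of_pos hk α
    have hA : Tendsto (fun s : ℝ =>
        ‖That (k * s) - ((k * s) ^ α * ℓ (1 / (k * s)) * q₀ (k * s))⁻¹ • P‖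
          * ((k * s) ^ α * ℓ (1 / (k * s)) * q₀ (k * s))) (𝓝[>] (0:ℝ)) (𝓝 0) :=
      hmain.comp (hks0 k hk)
    have hR := hratio k hk
    have hR1 : Tendsto (fun s : ℝ => |ℓ (1 / s) / ℓ (1 / (k * s)) - 1|)
        (𝓝[>] (0:ℝ)) (𝓝 0) := by
      have h := hR.sub_const 1
      rw [sub_self] at h
      simpa using h.abs
    have hRev : ∀ᶠ s in 𝓝[>] (0:ℝ), ℓ (1 / s) / ℓ (1 / (k * s)) ≤ 2 := by
      have := hR.eventually_le_const (by norm_num : (1:ℝ) < 2)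
      exact this
    have hbnd : Tendsto (fun s : ℝ =>
        (2 * (k ^ α)⁻¹ * m⁻¹) *
          (‖That (k * s) - ((k * s) ^ α * ℓ (1 / (k * s)) * q₀ (k * s))⁻¹ • P‖
            * ((k * s) ^ α * ℓ (1 / (k * s)) * q₀ (k * s)))
        + ((k ^ α)⁻¹ * m⁻¹ * ‖P‖) * |ℓ (1 / s) / ℓ (1 / (k * s)) - 1|)
        (𝓝[>] (0:ℝ)) (𝓝 0) := by
      have := (hA.const_mul (2 * (k ^ α)⁻¹ * m⁻¹)).add (hR1.const_mul ((k ^ α)⁻¹ * m⁻¹ * ‖P‖))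
      simpa using this
    refine squeeze_zero' ?_ ?_ hbnd
    · filter_upwards [self_mem_nhdsWithin] with s hs
      have hs0 : (0:ℝ) < s := hs
      exact mul_nonneg (norm_nonneg _)
        (mul_nonneg (Real.rpow_nonneg hs0.le α) (hℓpos _ (by positivity)).le)
    · filter_upwards [self_mem_nhdsWithin, hRev] with s hs hR2
      have hs0 : (0:ℝ) < s := hs
      have hks : (0:ℝ) < k * s := mul_pos hk hs0
      have hsα : (0:ℝ) < s ^ α := Real.rpow_pos_of_pos hs0 α
      have hℓ1 : (0:ℝ) < ℓ (1 / s) := hℓpos _ (by positivity)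
      have hℓ2 : (0:ℝ) < ℓ (1 / (k * s)) := hℓpos _ (by positivity)
      have hq : (0:ℝ) < q₀ (k * s) := hq₀pos _ hks
      have hksα : (k * s) ^ α = k ^ α * s ^ α := Real.mul_rpow hk.le hs0.le
      have hF : (0:ℝ) < s ^ α * ℓ (1 / s) := mul_pos hsα hℓ1
      have hH : (0:ℝ) < (k * s) ^ α * ℓ (1 / (k * s)) * q₀ (k * s) := by
        rw [hksα]; positivity
      -- triangle inequality split
      have hsplit : That (k * s) - ((s ^ α * ℓ (1 / s))⁻¹ * (k ^ α * q₀ (k * s))⁻¹) • P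
          = (That (k * s) - ((k * s) ^ α * ℓ (1 / (k * s)) * q₀ (k * s))⁻¹ • P)
            + ((((k * s) ^ α * ℓ (1 / (k * s)) * q₀ (k * s))⁻¹
              - (s ^ α * ℓ (1 / s))⁻¹ * (k ^ α * q₀ (k * s))⁻¹) • P) := by
        rw [sub_smul]; abel
      have htri : ‖That (k * s) - ((s ^ α * ℓ (1 / s))⁻¹ * (k ^ α * q₀ (k * s))⁻¹) • P‖
          ≤ ‖That (k * s) - ((k * s) ^ α * ℓ (1 / (k * s)) * q₀ (k * s))⁻¹ • P‖
            + |((k * s) ^ α * ℓ (1 / (k * s)) * q₀ (k * s))⁻¹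
              - (s ^ α * ℓ (1 / s))⁻¹ * (k ^ α * q₀ (k * s))⁻¹| * ‖P‖ := by
        rw [hsplit]
        refine (norm_add_le _ _).trans ?_
        rw [norm_smul (((k * s) ^ α * ℓ (1 / (k * s)) * q₀ (k * s))⁻¹
              - (s ^ α * ℓ (1 / s))⁻¹ * (k ^ α * q₀ (k * s))⁻¹) P, Real.norm_eq_abs]
      -- bound for the F/H ratio
      have hFH : s ^ α * ℓ (1 / s)
          ≤ (2 * (k ^ α)⁻¹ * m⁻¹) * ((k * s) ^ α * ℓ (1 / (k * s)) * q₀ (k * s)) := by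
        rw [hksα]
        have h1 : ℓ (1 / s) ≤ 2 * ℓ (1 / (k * s)) := by
          rw [div_le_iff₀ hℓ2] at hR2; linarith
        have h2 : (1:ℝ) ≤ m⁻¹ * q₀ (k * s) := by
          rw [inv_mul_eq_div, le_div_iff₀ hm0, one_mul]
          exact hmlow _ hks
        have e1 : (2 * (k ^ α)⁻¹ * m⁻¹) * (k ^ α * s ^ α * ℓ (1 / (k * s)) * q₀ (k * s))
            = (2 * (m⁻¹ * q₀ (k * s))) * (s ^ α * ℓ (1 / (k * s))) := by
          field_simp
        rw [e1]
        have h3 : s ^ α * ℓ (1 / s) ≤ s ^ α * (2 * ℓ (1 / (k * s))) :=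
          mul_le_mul_of_nonneg_left h1 hsα.le
        have h4 : (2:ℝ) * 1 * (s ^ α * ℓ (1 / (k * s)))
            ≤ (2 * (m⁻¹ * q₀ (k * s))) * (s ^ α * ℓ (1 / (k * s))) :=
          mul_le_mul_of_nonneg_right (by linarith) (mul_pos hsα hℓ2).le
        have h5 : s ^ α * (2 * ℓ (1 / (k * s))) = 2 * 1 * (s ^ α * ℓ (1 / (k * s))) := by ring
        linarith
      -- the Δ * F computation
      have hΔ : (((k * s) ^ α * ℓ (1 / (k * s)) * q₀ (k * s))⁻¹
            - (s ^ α * ℓ (1 / s))⁻¹ * (k ^ α * q₀ (k * s))⁻¹) * (s ^ α * ℓ (1 / s))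
          = (k ^ α * q₀ (k * s))⁻¹ * (ℓ (1 / s) / ℓ (1 / (k * s)) - 1) := by
        rw [hksα]
        field_simp
      have hΔabs : |((k * s) ^ α * ℓ (1 / (k * s)) * q₀ (k * s))⁻¹
            - (s ^ α * ℓ (1 / s))⁻¹ * (k ^ α * q₀ (k * s))⁻¹| * (s ^ α * ℓ (1 / s))
          ≤ (k ^ α)⁻¹ * m⁻¹ * |ℓ (1 / s) / ℓ (1 / (k * s)) - 1| := by
        rw [show |((k * s) ^ α * ℓ (1 / (k * s)) * q₀ (k * s))⁻¹
            - (s ^ α * ℓ (1 / s))⁻¹ * (k ^ α * q₀ (k * s))⁻¹| * (s ^ α * ℓ (1 / s))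
          = |(((k * s) ^ α * ℓ (1 / (k * s)) * q₀ (k * s))⁻¹
            - (s ^ α * ℓ (1 / s))⁻¹ * (k ^ α * q₀ (k * s))⁻¹) * (s ^ α * ℓ (1 / s))|
          from by rw [abs_mul, abs_of_nonneg hF.le]]
        rw [hΔ, abs_mul, abs_of_nonneg (by positivity : (0:ℝ) ≤ (k ^ α * q₀ (k * s))⁻¹)]
        have hle : (k ^ α * q₀ (k * s))⁻¹ ≤ (k ^ α)⁻¹ * m⁻¹ := by
          rw [← mul_inv]
          exact inv_anti₀ (mul_pos hkα hm0)
            (mul_le_mul_of_nonneg_left (hmlow _ hks) hkα.le)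
        exact mul_le_mul_of_nonneg_right hle (abs_nonneg _)
      calc ‖That (k * s) - ((s ^ α * ℓ (1 / s))⁻¹ * (k ^ α * q₀ (k * s))⁻¹) • P‖
            * (s ^ α * ℓ (1 / s))
          ≤ (‖That (k * s) - ((k * s) ^ α * ℓ (1 / (k * s)) * q₀ (k * s))⁻¹ • P‖
              + |((k * s) ^ α * ℓ (1 / (k * s)) * q₀ (k * s))⁻¹
                - (s ^ α * ℓ (1 / s))⁻¹ * (k ^ α * q₀ (k * s))⁻¹| * ‖P‖)
              * (s ^ α * ℓ (1 / s)) := mul_le_mul_of_nonneg_right htri hF.le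
        _ = ‖That (k * s) - ((k * s) ^ α * ℓ (1 / (k * s)) * q₀ (k * s))⁻¹ • P‖
              * (s ^ α * ℓ (1 / s))
            + (|((k * s) ^ α * ℓ (1 / (k * s)) * q₀ (k * s))⁻¹
                - (s ^ α * ℓ (1 / s))⁻¹ * (k ^ α * q₀ (k * s))⁻¹| * (s ^ α * ℓ (1 / s))) * ‖P‖ := by
            ring
        _ ≤ (2 * (k ^ α)⁻¹ * m⁻¹) *
              (‖That (k * s) - ((k * s) ^ α * ℓ (1 / (k * s)) * q₀ (k * s))⁻¹ • P‖
                * ((k * s) ^ α * ℓ (1 / (k * s)) * q₀ (k * s)))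
            + ((k ^ α)⁻¹ * m⁻¹ * ‖P‖) * |ℓ (1 / s) / ℓ (1 / (k * s)) - 1| := by
            refine add_le_add ?_ ?_
            · calc ‖That (k * s) - ((k * s) ^ α * ℓ (1 / (k * s)) * q₀ (k * s))⁻¹ • P‖
                  * (s ^ α * ℓ (1 / s))
                  ≤ ‖That (k * s) - ((k * s) ^ α * ℓ (1 / (k * s)) * q₀ (k * s))⁻¹ • P‖
                    * ((2 * (k ^ α)⁻¹ * m⁻¹) * ((k * s) ^ α * ℓ (1 / (k * s)) * q₀ (k * s))) :=
                    mul_le_mul_of_nonneg_left hFH (norm_nonneg _)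
                _ = (2 * (k ^ α)⁻¹ * m⁻¹) *
                    (‖That (k * s) - ((k * s) ^ α * ℓ (1 / (k * s)) * q₀ (k * s))⁻¹ • P‖
                      * ((k * s) ^ α * ℓ (1 / (k * s)) * q₀ (k * s))) := by ring
            · calc (|((k * s) ^ α * ℓ (1 / (k * s)) * q₀ (k * s))⁻¹
                    - (s ^ α * ℓ (1 / s))⁻¹ * (k ^ α * q₀ (k * s))⁻¹| * (s ^ α * ℓ (1 / s))) * ‖P‖
                  ≤ ((k ^ α)⁻¹ * m⁻¹ * |ℓ (1 / s) / ℓ (1 / (k * s)) - 1|) * ‖P‖ :=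
                    mul_le_mul_of_nonneg_right hΔabs (norm_nonneg _)
                _ = ((k ^ α)⁻¹ * m⁻¹ * ‖P‖) * |ℓ (1 / s) / ℓ (1 / (k * s)) - 1| := by ring
  -- assemble the final squeeze
  have hbnd : Tendsto (fun s : ℝ => ∑ i ∈ Finset.range N,
      ‖Q.coeff i • (That ((i:ℝ) * s)
          - ((s ^ α * ℓ (1 / s))⁻¹ * ((i:ℝ) ^ α * q₀ ((i:ℝ) * s))⁻¹) • P)‖
        * (s ^ α * ℓ (1 / s))) (𝓝[>] (0:ℝ)) (𝓝 0) := by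
    have h : ∀ i ∈ Finset.range N, Tendsto (fun s : ℝ =>
        ‖Q.coeff i • (That ((i:ℝ) * s)
          - ((s ^ α * ℓ (1 / s))⁻¹ * ((i:ℝ) ^ α * q₀ ((i:ℝ) * s))⁻¹) • P)‖
        * (s ^ α * ℓ (1 / s))) (𝓝[>] (0:ℝ)) (𝓝 0) := by
      intro i _
      rcases Nat.eq_zero_or_pos i with rfl | hi
      · have he : (fun s : ℝ => ‖Q.coeff 0 • (That (((0:ℕ):ℝ) * s)
            - ((s ^ α * ℓ (1 / s))⁻¹ * (((0:ℕ):ℝ) ^ α * q₀ (((0:ℕ):ℝ) * s))⁻¹) • P)‖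
            * (s ^ α * ℓ (1 / s))) = fun _ => (0:ℝ) := by
          funext s
          rw [hQ0, zero_smul, norm_zero, zero_mul]
        rw [he]
        exact tendsto_const_nhds
      · have hipos : (0:ℝ) < (i:ℝ) := Nat.cast_pos.mpr hi
        have he : ∀ s : ℝ, ‖Q.coeff i • (That ((i:ℝ) * s)
            - ((s ^ α * ℓ (1 / s))⁻¹ * ((i:ℝ) ^ α * q₀ ((i:ℝ) * s))⁻¹) • P)‖
            * (s ^ α * ℓ (1 / s))
            = |Q.coeff i| * (‖That ((i:ℝ) * s)
            - ((s ^ α * ℓ (1 / s))⁻¹ * ((i:ℝ) ^ α * q₀ ((i:ℝ) * s))⁻¹) • P‖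
            * (s ^ α * ℓ (1 / s))) := by
          intro s
          rw [norm_smul (Q.coeff i) (That ((i:ℝ) * s)
            - ((s ^ α * ℓ (1 / s))⁻¹ * ((i:ℝ) ^ α * q₀ ((i:ℝ) * s))⁻¹) • P),
            Real.norm_eq_abs, mul_assoc]
        simp only [he]
        have h2 := (hcore (i:ℝ) hipos).const_mul |Q.coeff i|
        simpa using h2
    have h2 := tendsto_finset_sum (Finset.range N) h
    simpa using h2
  refine squeeze_zero' ?_ ?_ hbnd
  · filter_upwards [self_mem_nhdsWithin] with s hs
    have hs0 : (0:ℝ) < s := hs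
    exact mul_nonneg (norm_nonneg _)
      (mul_nonneg (Real.rpow_nonneg hs0.le α) (hℓpos _ (by positivity)).le)
  · filter_upwards [self_mem_nhdsWithin] with s hs
    have hs0 : (0:ℝ) < s := hs
    have hFnn : (0:ℝ) ≤ s ^ α * ℓ (1 / s) :=
      mul_nonneg (Real.rpow_nonneg hs0.le α) (hℓpos _ (by positivity)).le
    have hGs : (∑' j : ℕ, Polynomial.eval (Real.exp (-s * j)) Q • T j)
        - ((s ^ α * ℓ (1 / s))⁻¹ * ∫ x : ℝ, Polynomial.eval (Real.exp (-x)) Q ∂(σ s)) • P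
        = ∑ i ∈ Finset.range N, Q.coeff i • (That ((i:ℝ) * s)
          - ((s ^ α * ℓ (1 / s))⁻¹ * ((i:ℝ) ^ α * q₀ ((i:ℝ) * s))⁻¹) • P) := by
      rw [htsum s hs0, hIeq s hs0, Finset.mul_sum, Finset.sum_smul, ← Finset.sum_sub_distrib]
      refine Finset.sum_congr rfl fun i _ => ?_
      rw [smul_sub, smul_smul, mul_left_comm]
    rw [hGs]
    calc ‖∑ i ∈ Finset.range N, Q.coeff i • (That ((i:ℝ) * s)
          - ((s ^ α * ℓ (1 / s))⁻¹ * ((i:ℝ) ^ α * q₀ ((i:ℝ) * s))⁻¹) • P)‖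
          * (s ^ α * ℓ (1 / s))
        ≤ (∑ i ∈ Finset.range N, ‖Q.coeff i • (That ((i:ℝ) * s)
          - ((s ^ α * ℓ (1 / s))⁻¹ * ((i:ℝ) ^ α * q₀ ((i:ℝ) * s))⁻¹) • P)‖)
          * (s ^ α * ℓ (1 / s)) :=
          mul_le_mul_of_nonneg_right (norm_sum_le _ _) hFnn
      _ = ∑ i ∈ Finset.range N, ‖Q.coeff i • (That ((i:ℝ) * s)
          - ((s ^ α * ℓ (1 / s))⁻¹ * ((i:ℝ) ^ α * q₀ ((i:ℝ) * s))⁻¹) • P)‖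
          * (s ^ α * ℓ (1 / s)) := Finset.sum_mul _ _ _
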